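/- For 0 < x < 1, ∫_0^x log^2(1+t)/t dt = log(x) log^2(1+x) - (2/3) log^3(1+x) - 2 Li_3(1/(1+x)) - 2 log(1+x) Li_2(1/(1+x)) + 2 ζ(3). -/

import Mathlib

open Real Filter Finset
open Topology

noncomputable def Li (m : ℕ) (x : ℝ) : ℝ := ∑' n : ℕ, x ^ (n + 1) / (n + 1 : ℝ) ^ m

noncomputable def H (p n : ℕ) : ℝ := ∑ j ∈ Finset.Icc 1 n, 1 / (j : ℝ) ^ p

noncomputable def Hbar (p n : ℕ) : ℝ := ∑ j ∈ Finset.Icc 1 n, (-1 : ℝ) ^ (j - 1) / (j : ℝ) ^ p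

lemma summable_aux (m : ℕ) (hm : 2 ≤ m) {y : ℝ} (hy : |y| ≤ 1) :
    Summable (fun n : ℕ => y ^ (n + 1) / (n + 1 : ℝ) ^ m) := by
  have h2 : Summable (fun n : ℕ => 1 / ((n : ℝ) + 1) ^ 2) := by
    have := Real.summable_one_div_nat_pow.mpr (le_refl 2)
    simpa using (summable_nat_add_iff 1).mpr this
  refine h2.of_norm_bounded (fun n => ?_)
  have hn1 : (1 : ℝ) ≤ ((n : ℝ) + 1) := by have := Nat.cast_nonneg (α := ℝ) n; linarith
  have hpos : (0:ℝ) < (n:ℝ)+1 := by positivity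
  rw [Real.norm_eq_abs, abs_div, abs_pow, abs_pow, abs_of_pos hpos]
  rw [div_le_div_iff₀ (by positivity) (by positivity)]
  calc |y| ^ (n+1) * ((n:ℝ)+1)^2 ≤ 1 * ((n:ℝ)+1)^m := by
        apply mul_le_mul (pow_le_one₀ (abs_nonneg _) hy) (pow_le_pow_right₀ hn1 hm)
          (by positivity) zero_le_one
    _ = 1 * ((n:ℝ)+1)^m := rfl

lemma Li_hasDerivAt (m : ℕ) (hm : 1 ≤ m) {y : ℝ} (hy : |y| < 1) :
    HasDerivAt (Li m) (∑' n : ℕ, y ^ n / (n + 1 : ℝ) ^ (m - 1)) y := by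
  set r : ℝ := (1 + |y|) / 2 with hr
  have hr0 : 0 < r := by positivity
  have hr1 : r < 1 := by rw [hr]; linarith
  have hyr : |y| < r := by rw [hr]; linarith
  have key : ∀ (n : ℕ) (z : ℝ),
      HasDerivAt (fun z : ℝ => z ^ (n + 1) / (n + 1 : ℝ) ^ m)
        (z ^ n / (n + 1 : ℝ) ^ (m - 1)) z := by
    intro n z
    have h := (hasDerivAt_pow (n + 1) z).div_const ((n + 1 : ℝ) ^ m)
    refine h.congr_deriv ?_
    have hm' : m = (m - 1) + 1 := (Nat.succ_pred_eq_of_pos hm).symm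
    have hpos : (0:ℝ) < (n:ℝ) + 1 := by positivity
    rw [hm', pow_succ]
    push_cast
    field_simp
  have hL : ∀ z : ℝ, Li m z = ∑' n : ℕ, z ^ (n + 1) / (n + 1 : ℝ) ^ m := fun z => rfl
  have := hasDerivAt_tsum_of_isPreconnected
    (u := fun n : ℕ => r ^ n) (t := Set.Ioo (-r) r)
    (g := fun (n : ℕ) (z : ℝ) => z ^ (n + 1) / (n + 1 : ℝ) ^ m)
    (g' := fun (n : ℕ) (z : ℝ) => z ^ n / (n + 1 : ℝ) ^ (m - 1))
    (summable_geometric_of_lt_one hr0.le hr1) isOpen_Ioo (convex_Ioo _ _).isPreconnected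
    (fun n z _ => key n z)
    (fun n z hz => by
      have hn1 : (1 : ℝ) ≤ ((n : ℝ) + 1) := by
        have := Nat.cast_nonneg (α := ℝ) n; linarith
      have hz' : |z| ≤ r := by
        rw [abs_le]; exact ⟨hz.1.le, hz.2.le⟩
      have hpos : (0:ℝ) < (n:ℝ) + 1 := by positivity
      rw [norm_div, norm_pow, norm_pow, Real.norm_eq_abs, Real.norm_eq_abs,
        abs_of_pos hpos]
      calc |z| ^ n / ((n:ℝ)+1) ^ (m-1) ≤ |z| ^ n / 1 := by
              gcongr; exact one_le_pow₀ hn1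
        _ = |z| ^ n := div_one _
        _ ≤ r ^ n := pow_le_pow_left₀ (abs_nonneg _) hz' n)
    (y₀ := 0) (by constructor <;> [linarith; exact hr0])
    (by simpa using summable_zero)
    (abs_lt.mp hyr)
  exact this

lemma Li_one_eq {y : ℝ} (hy : |y| < 1) : Li 1 y = -Real.log (1 - y) := by
  have h := hasSum_pow_div_log_of_abs_lt_one hy
  rw [Li]
  simp only [pow_one]
  exact h.tsum_eq

lemma Li_deriv (m : ℕ) (hm : 1 ≤ m) {y : ℝ} (hy : |y| < 1) (hy0 : y ≠ 0) :
    HasDerivAt (Li m) (Li (m - 1) y / y) y := by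
  have h := Li_hasDerivAt m hm hy
  have : Li (m - 1) y / y = ∑' n : ℕ, y ^ n / (n + 1 : ℝ) ^ (m - 1) := by
    rw [Li]
    have heq : ∀ n : ℕ, y ^ (n + 1) / (n + 1 : ℝ) ^ (m - 1)
        = y * (y ^ n / (n + 1 : ℝ) ^ (m - 1)) := by
      intro n; rw [pow_succ]; ring
    simp_rw [heq]
    rw [tsum_mul_left, mul_div_cancel_left₀ _ hy0]
  rwa [this]

lemma bound_aux (m : ℕ) (hm : 2 ≤ m) {y : ℝ} (hy : |y| ≤ 1) (n : ℕ) :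
    ‖y ^ (n + 1) / (n + 1 : ℝ) ^ m‖ ≤ 1 / ((n : ℝ) + 1) ^ 2 := by
  have hn1 : (1 : ℝ) ≤ ((n : ℝ) + 1) := by have := Nat.cast_nonneg (α := ℝ) n; linarith
  have hpos : (0:ℝ) < (n:ℝ) + 1 := by positivity
  rw [norm_div, norm_pow, norm_pow, Real.norm_eq_abs, Real.norm_eq_abs, abs_of_pos hpos]
  rw [div_le_div_iff₀ (by positivity) (by positivity)]
  have h1 : |y| ^ (n+1) ≤ 1 := pow_le_one₀ (abs_nonneg _) hy
  have h2 : ((n:ℝ)+1)^2 ≤ ((n:ℝ)+1)^m := pow_le_pow_right₀ hn1 hm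
  nlinarith [pow_nonneg (abs_nonneg y) (n+1), pow_nonneg hpos.le 2]

lemma Li_continuousOn (m : ℕ) (hm : 2 ≤ m) : ContinuousOn (Li m) (Set.Icc (-1:ℝ) 1) := by
  rw [continuousOn_iff_continuous_restrict]
  have : (Set.Icc (-1:ℝ) 1).restrict (Li m)
      = fun z : Set.Icc (-1:ℝ) 1 => ∑' n : ℕ, (z:ℝ) ^ (n + 1) / (n + 1 : ℝ) ^ m := rfl
  show Continuous (fun z : Set.Icc (-1:ℝ) 1 => ∑' n : ℕ, (z:ℝ) ^ (n + 1) / (n + 1 : ℝ) ^ m)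
  apply continuous_tsum (u := fun n : ℕ => 1 / ((n:ℝ)+1)^2)
  · intro n
    exact (continuous_subtype_val.pow _).div_const _
  · have := Real.summable_one_div_nat_pow.mpr (le_refl 2)
    simpa using (summable_nat_add_iff 1).mpr this
  · intro n z
    exact bound_aux m hm (abs_le.mpr ⟨z.2.1, z.2.2⟩) n

lemma Li_tendsto (m : ℕ) (hm : 2 ≤ m) :
    Tendsto (fun ε : ℝ => Li m (1/(1+ε))) (𝓝[>] (0:ℝ)) (𝓝 (Li m 1)) := by
  have hc : ContinuousWithinAt (Li m) (Set.Icc (-1:ℝ) 1) 1 :=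
    (Li_continuousOn m hm).continuousWithinAt (by norm_num)
  apply hc.tendsto.comp
  refine tendsto_nhdsWithin_of_tendsto_nhds_of_eventually_within _ ?_ ?_
  · have h1 : Tendsto (fun ε : ℝ => 1/(1+ε)) (𝓝 0) (𝓝 (1/(1+0))) := by
      apply ContinuousAt.tendsto
      exact ContinuousAt.div continuousAt_const (continuousAt_const.add continuousAt_id)
        (by norm_num)
    have h2 : (1 : ℝ)/(1+0) = 1 := by norm_num
    rw [h2] at h1
    exact h1.mono_left nhdsWithin_le_nhds
  · filter_upwards [self_mem_nhdsWithin] with ε (hε : 0 < ε)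
    constructor
    · have : (0:ℝ) < 1/(1+ε) := by positivity
      linarith
    · rw [div_le_one (by linarith)]; linarith

noncomputable def Fx (t : ℝ) : ℝ :=
  Real.log t * (Real.log (1+t))^2 - (2/3) * (Real.log (1+t))^3
    - 2 * Li 3 (1/(1+t)) - 2 * Real.log (1+t) * Li 2 (1/(1+t))

lemma Fx_hasDerivAt {t : ℝ} (ht0 : 0 < t) (ht1 : t < 1) :
    HasDerivAt Fx ((Real.log (1+t))^2 / t) t := by
  have h1t : (0:ℝ) < 1 + t := by linarith
  set y : ℝ := 1/(1+t) with hy_def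
  have hy0 : 0 < y := by positivity
  have hy1 : y < 1 := by rw [hy_def, div_lt_one h1t]; linarith
  have hy_abs : |y| < 1 := by rw [abs_of_pos hy0]; exact hy1
  have hy_ne : y ≠ 0 := hy0.ne'
  -- derivative of t ↦ log (1+t)
  have hlog1 : HasDerivAt (fun t : ℝ => Real.log (1+t)) (1/(1+t)) t := by
    have h := (Real.hasDerivAt_log h1t.ne').comp t ((hasDerivAt_id t).const_add 1)
    simpa [one_div, Function.comp_def] using h
  -- derivative of t ↦ 1/(1+t)
  have hinner : HasDerivAt (fun t : ℝ => 1/(1+t)) (-1/(1+t)^2) t := by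
    have h := (((hasDerivAt_id t).const_add 1).inv h1t.ne')
    simpa [one_div] using (show HasDerivAt (fun t : ℝ => (1+t)⁻¹) _ t from h)
  -- derivative of t ↦ Li 3 (1/(1+t))
  have hLi3y : HasDerivAt (Li 3) (Li 2 y / y) y := by
    have h := Li_deriv 3 (by norm_num) hy_abs hy_ne
    norm_num at h
    exact h
  have hLi3 : HasDerivAt (fun t : ℝ => Li 3 (1/(1+t)))
      (Li 2 y / y * (-1/(1+t)^2)) t := by exact hLi3y.comp (h := fun t : ℝ => 1/(1+t)) t hinner
  -- derivative of t ↦ Li 2 (1/(1+t))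
  have hLi2y : HasDerivAt (Li 2) (-Real.log (1-y) / y) y := by
    have h := Li_deriv 2 (by norm_num) hy_abs hy_ne
    norm_num at h
    rwa [Li_one_eq hy_abs] at h
  have hLi2 : HasDerivAt (fun t : ℝ => Li 2 (1/(1+t)))
      (-Real.log (1-y) / y * (-1/(1+t)^2)) t := by exact hLi2y.comp (h := fun t : ℝ => 1/(1+t)) t hinner
  -- assemble
  have p1 : HasDerivAt (fun t : ℝ => Real.log t * (Real.log (1+t))^2)
      (t⁻¹ * (Real.log (1+t))^2
        + Real.log t * (2 * (Real.log (1+t))^1 * (1/(1+t)))) t :=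
    (Real.hasDerivAt_log ht0.ne').mul (hlog1.pow 2)
  have p2 : HasDerivAt (fun t : ℝ => (2/3 : ℝ) * (Real.log (1+t))^3)
      ((2/3 : ℝ) * (3 * (Real.log (1+t))^2 * (1/(1+t)))) t := (hlog1.pow 3).const_mul (2/3)
  have p3 : HasDerivAt (fun t : ℝ => 2 * Li 3 (1/(1+t)))
      (2 * (Li 2 y / y * (-1/(1+t)^2))) t := hLi3.const_mul 2
  have p4 : HasDerivAt (fun t : ℝ => 2 * Real.log (1+t) * Li 2 (1/(1+t)))
      ((2 * (1/(1+t))) * Li 2 (1/(1+t))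
        + 2 * Real.log (1+t) * (-Real.log (1-y) / y * (-1/(1+t)^2))) t :=
    (hlog1.const_mul 2).mul hLi2
  have hF := ((p1.sub p2).sub p3).sub p4
  have hFx : Fx = fun t : ℝ => Real.log t * (Real.log (1+t))^2 - (2/3) * (Real.log (1+t))^3
      - 2 * Li 3 (1/(1+t)) - 2 * Real.log (1+t) * Li 2 (1/(1+t)) := rfl
  rw [hFx]
  refine hF.congr_deriv ?_
  have hlog_sub : Real.log (1 - y) = Real.log t - Real.log (1+t) := by
    have h1 : 1 - y = t/(1+t) := by
      rw [hy_def]; field_simp; ring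
    rw [h1, Real.log_div ht0.ne' h1t.ne']
  rw [hlog_sub, hy_def]
  field_simp
  ring

lemma f_bound {t : ℝ} (ht : 0 < t) : (Real.log (1+t))^2 / t ≤ t := by
  have h1 : Real.log (1+t) ≤ t := by
    have := Real.log_le_sub_one_of_pos (show (0:ℝ) < 1+t by linarith); linarith
  have h0 : 0 ≤ Real.log (1+t) := Real.log_nonneg (by linarith)
  rw [div_le_iff₀ ht]
  nlinarith

lemma f_integrable {x : ℝ} (hx0 : 0 < x) (hx1 : x < 1) :
    IntervalIntegrable (fun t => (Real.log (1+t))^2 / t) MeasureTheory.volume 0 x := by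
  rw [intervalIntegrable_iff_integrableOn_Ioc_of_le hx0.le]
  apply MeasureTheory.Integrable.mono' (g := fun _ : ℝ => (1:ℝ))
    (MeasureTheory.integrableOn_const measure_Ioc_lt_top.ne)
  · apply ContinuousOn.aestronglyMeasurable ?_ measurableSet_Ioc
    apply ContinuousOn.div
    · apply ContinuousOn.pow
      apply ContinuousOn.log
      · fun_prop
      · intro t ht
        have : 0 < t := ht.1
        intro h; linarith [h]
    · exact continuousOn_id
    · intro t ht; exact ht.1.ne'
  · rw [MeasureTheory.ae_restrict_iff' measurableSet_Ioc]
    filter_upwards with t ht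
    rw [Real.norm_eq_abs, abs_of_nonneg (div_nonneg (sq_nonneg _) ht.1.le)]
    calc (Real.log (1+t))^2 / t ≤ t := f_bound ht.1
      _ ≤ 1 := by linarith [ht.2]

theorem stmt10 (x : ℝ) (hx0 : 0 < x) (hx1 : x < 1) :
    ∫ t in (0 : ℝ)..x, (Real.log (1 + t)) ^ 2 / t
      = Real.log x * (Real.log (1 + x)) ^ 2 - (2 / 3) * (Real.log (1 + x)) ^ 3
        - 2 * Li 3 (1 / (1 + x)) - 2 * Real.log (1 + x) * Li 2 (1 / (1 + x))
        + 2 * Li 3 1 := by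
  set f : ℝ → ℝ := fun t => (Real.log (1 + t)) ^ 2 / t with hf
  have hint : IntervalIntegrable f MeasureTheory.volume 0 x := f_integrable hx0 hx1
  have hmemI : ∀ ε ∈ Set.Ioo (0:ℝ) x, IntervalIntegrable f MeasureTheory.volume 0 ε ∧
      IntervalIntegrable f MeasureTheory.volume ε x := by
    intro ε hε
    constructor
    · refine hint.mono_set (Set.uIcc_subset_uIcc ?_ ?_)
      · rw [Set.uIcc_of_le hx0.le]; exact ⟨le_refl 0, hx0.le⟩
      · rw [Set.uIcc_of_le hx0.le]; exact ⟨hε.1.le, hε.2.le⟩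
    · refine hint.mono_set (Set.uIcc_subset_uIcc ?_ ?_)
      · rw [Set.uIcc_of_le hx0.le]; exact ⟨hε.1.le, hε.2.le⟩
      · rw [Set.uIcc_of_le hx0.le]; exact ⟨hx0.le, le_refl x⟩
  -- FTC on [ε, x]
  have step : ∀ ε ∈ Set.Ioo (0:ℝ) x, ∫ t in ε..x, f t = Fx x - Fx ε := by
    intro ε hε
    apply intervalIntegral.integral_eq_sub_of_hasDerivAt
    · intro t ht
      rw [Set.uIcc_of_le hε.2.le] at ht
      exact Fx_hasDerivAt (lt_of_lt_of_le hε.1 ht.1) (lt_of_le_of_lt ht.2 hx1)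
    · exact (hmemI ε hε).2
  have hIoo : Set.Ioo (0:ℝ) x ∈ 𝓝[>] (0:ℝ) := Ioo_mem_nhdsGT_of_mem ⟨le_refl 0, hx0⟩
  -- tail integral tends to the full integral
  have t2 : Tendsto (fun ε => ∫ t in (0:ℝ)..ε, f t) (𝓝[>] (0:ℝ)) (𝓝 0) := by
    apply squeeze_zero_norm' (a := fun ε : ℝ => 1 * |ε - 0|)
    · filter_upwards [hIoo] with ε hε
      apply intervalIntegral.norm_integral_le_of_norm_le_const
      intro t ht
      rw [Set.uIoc_of_le hε.1.le] at ht
      rw [Real.norm_eq_abs, abs_of_nonneg (div_nonneg (sq_nonneg _) ht.1.le)]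
      calc (Real.log (1+t))^2 / t ≤ t := f_bound ht.1
        _ ≤ 1 := by linarith [ht.2, hε.2]
    · have : Tendsto (fun ε : ℝ => 1 * |ε - 0|) (𝓝 0) (𝓝 (1 * |(0:ℝ) - 0|)) := by
        apply Tendsto.const_mul
        exact ((continuous_id.sub continuous_const).abs).tendsto 0
      simp only [sub_zero, abs_zero, mul_zero] at this
      simpa using this.mono_left nhdsWithin_le_nhds
  have t1 : Tendsto (fun ε => ∫ t in ε..x, f t) (𝓝[>] (0:ℝ))
      (𝓝 (∫ t in (0:ℝ)..x, f t)) := by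
    have heq : ∀ ε ∈ Set.Ioo (0:ℝ) x,
        (∫ t in (0:ℝ)..x, f t) - (∫ t in (0:ℝ)..ε, f t) = ∫ t in ε..x, f t := by
      intro ε hε
      have h := intervalIntegral.integral_add_adjacent_intervals (hmemI ε hε).1 (hmemI ε hε).2
      linarith
    have hT : Tendsto (fun ε => (∫ t in (0:ℝ)..x, f t) - (∫ t in (0:ℝ)..ε, f t))
        (𝓝[>] (0:ℝ)) (𝓝 ((∫ t in (0:ℝ)..x, f t) - 0)) := tendsto_const_nhds.sub t2
    rw [sub_zero] at hT
    refine hT.congr' ?_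
    filter_upwards [hIoo] with ε hε using heq ε hε
  -- limit of Fx at 0⁺
  have hA : Tendsto (fun ε : ℝ => Real.log ε * (Real.log (1+ε))^2) (𝓝[>] (0:ℝ)) (𝓝 0) := by
    have hlr : Tendsto (fun ε : ℝ => Real.log ε * ε) (𝓝[>] (0:ℝ)) (𝓝 0) := by
      have := tendsto_log_mul_rpow_nhdsGT_zero (r := 1) zero_lt_one
      simpa [Real.rpow_one] using this
    have hid : Tendsto (fun ε : ℝ => ε) (𝓝[>] (0:ℝ)) (𝓝 0) :=
      tendsto_id.mono_left nhdsWithin_le_nhds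
    have hg : Tendsto (fun ε : ℝ => |Real.log ε * ε| * ε) (𝓝[>] (0:ℝ)) (𝓝 0) := by
      have := (hlr.abs).mul hid
      simpa using this
    apply squeeze_zero_norm' ?_ hg
    filter_upwards [hIoo] with ε hε
    have hε1 : ε < 1 := lt_trans hε.2 hx1
    have h1 : Real.log (1+ε) ≤ ε := by
      have := Real.log_le_sub_one_of_pos (show (0:ℝ) < 1+ε by linarith [hε.1]); linarith
    have h0 : 0 ≤ Real.log (1+ε) := Real.log_nonneg (by linarith [hε.1])
    have hsq : (Real.log (1+ε))^2 ≤ ε^2 := by nlinarith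
    calc ‖Real.log ε * (Real.log (1+ε))^2‖
        = |Real.log ε| * (Real.log (1+ε))^2 := by
          rw [Real.norm_eq_abs, abs_mul, abs_of_nonneg (sq_nonneg (Real.log (1+ε)))]
      _ ≤ |Real.log ε| * ε^2 := mul_le_mul_of_nonneg_left hsq (abs_nonneg _)
      _ = |Real.log ε * ε| * ε := by
          rw [abs_mul, abs_of_pos hε.1]; ring
  have hD : Tendsto (fun ε : ℝ => Real.log (1+ε)) (𝓝[>] (0:ℝ)) (𝓝 0) := by
    have hc : ContinuousAt (fun ε : ℝ => Real.log (1+ε)) 0 := by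
      apply ContinuousAt.comp (x := (0:ℝ)) (g := Real.log)
      · simp only [add_zero]
        exact Real.continuousAt_log (by norm_num)
      · exact continuousAt_const.add continuousAt_id
    have := hc.tendsto
    simp only [add_zero, Real.log_one] at this
    exact this.mono_left nhdsWithin_le_nhds
  have hB : Tendsto (fun ε : ℝ => (Real.log (1+ε))^3) (𝓝[>] (0:ℝ)) (𝓝 0) := by
    have := hD.pow 3
    simpa using this
  have hC3 : Tendsto (fun ε : ℝ => Li 3 (1/(1+ε))) (𝓝[>] (0:ℝ)) (𝓝 (Li 3 1)) :=
    Li_tendsto 3 (by norm_num)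
  have hC2 : Tendsto (fun ε : ℝ => Li 2 (1/(1+ε))) (𝓝[>] (0:ℝ)) (𝓝 (Li 2 1)) :=
    Li_tendsto 2 (le_refl 2)
  have t3 : Tendsto Fx (𝓝[>] (0:ℝ))
      (𝓝 (0 - (2/3)*0 - 2*Li 3 1 - 2*0*Li 2 1)) := by
    have h4 : Tendsto (fun ε : ℝ => 2 * Real.log (1+ε) * Li 2 (1/(1+ε)))
        (𝓝[>] (0:ℝ)) (𝓝 (2*0*Li 2 1)) := (hD.const_mul 2).mul hC2
    exact ((hA.sub (hB.const_mul (2/3))).sub (hC3.const_mul 2)).sub h4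
  have t3' : Tendsto Fx (𝓝[>] (0:ℝ)) (𝓝 (-(2 * Li 3 1))) := by
    have : (0:ℝ) - (2/3)*0 - 2*Li 3 1 - 2*0*Li 2 1 = -(2 * Li 3 1) := by ring
    rwa [this] at t3
  have t4 : Tendsto (fun ε => ∫ t in ε..x, f t) (𝓝[>] (0:ℝ))
      (𝓝 (Fx x - -(2 * Li 3 1))) := by
    refine (tendsto_const_nhds.sub t3').congr' ?_
    filter_upwards [hIoo] with ε hε using (step ε hε).symm
  have hkey : (∫ t in (0:ℝ)..x, f t) = Fx x - -(2 * Li 3 1) := tendsto_nhds_unique t1 t4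
  rw [hf] at hkey
  rw [hkey]
  simp only [Fx]
  ring
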